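/- Let B be a graph on n vertices. Suppose there exists a sequence of distinct vertices u_1, ..., u_{2k-1} such that for each x ∈ [1, 2k-1], vertex u_x has at most k-1 neighbors in V(B) \ {u_1, ..., u_x}. Then B has no subgraph H with minimum degree at least k and at least n-2k+2 vertices; in particular, B has no k-connected subgraph on at least n-2k+2 vertices. -/

import Mathlib

/-- A finite set `S` of vertices induces a `k`-connected subgraph of `G`:
it has more than `k` vertices and removing any set of fewer than `k`
vertices leaves the induced graph connected. -/
def KConnOn {V : Type*} [Fintype V] [DecidableEq V]
    (G : SimpleGraph V) (k : ℕ) (S : Finset V) : Prop :=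
  k < S.card ∧ ∀ T : Finset V, T.card < k →
    (G.induce ((S : Set V) \ (T : Set V))).Connected

private theorem keyA {V : Type*} [Fintype V] [DecidableEq V]
    (B : SimpleGraph V) [DecidableRel B.Adj] (k : ℕ) (hk : 0 < k)
    (u : Fin (2 * k - 1) → V) (hu : Function.Injective u)
    (hdeg : ∀ x : Fin (2 * k - 1),
      (Finset.univ.filter (fun v =>
        B.Adj (u x) v ∧ ∀ y : Fin (2 * k - 1), y ≤ x → v ≠ u y)).card ≤ k - 1)
    (S : Finset V) (hcard : Fintype.card V - (2 * k - 2) ≤ S.card)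
    (hmin : ∀ v ∈ S, k ≤ (S.filter (fun w => B.Adj v w)).card) : False := by
  have hcompl : Sᶜ.card ≤ 2 * k - 2 := by
    rw [Finset.card_compl]
    omega
  -- there is some u x in S
  have hF : (Finset.univ.filter (fun x : Fin (2 * k - 1) => u x ∈ S)).Nonempty := by
    by_contra h
    rw [Finset.not_nonempty_iff_eq_empty, Finset.filter_eq_empty_iff] at h
    have hsub : Finset.univ.image u ⊆ Sᶜ := by
      intro v hv
      obtain ⟨x, _, rfl⟩ := Finset.mem_image.mp hv
      simpa using h (Finset.mem_univ x)
    have h1 : (Finset.univ.image u).card = 2 * k - 1 := by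
      rw [Finset.card_image_of_injective _ hu, Finset.card_univ, Fintype.card_fin]
    have h2 := Finset.card_le_card hsub
    omega
  set F := Finset.univ.filter (fun x : Fin (2 * k - 1) => u x ∈ S) with hFdef
  set x := F.min' hF with hxdef
  have hxF : x ∈ F := F.min'_mem hF
  have hxS : u x ∈ S := by
    have := hxF
    rw [hFdef, Finset.mem_filter] at this
    exact this.2
  have hsub : S.filter (fun w => B.Adj (u x) w) ⊆
      Finset.univ.filter (fun v =>
        B.Adj (u x) v ∧ ∀ y : Fin (2 * k - 1), y ≤ x → v ≠ u y) := by
    intro w hw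
    rw [Finset.mem_filter] at hw
    rw [Finset.mem_filter]
    refine ⟨Finset.mem_univ _, hw.2, ?_⟩
    intro y hy heq
    have hyS : u y ∈ S := heq ▸ hw.1
    have hyF : y ∈ F := by
      rw [hFdef, Finset.mem_filter]; exact ⟨Finset.mem_univ _, hyS⟩
    have hxy : x ≤ y := F.min'_le y hyF
    have : y = x := le_antisymm hy hxy
    subst this
    exact B.loopless.irrefl _ (heq ▸ hw.2)
  have h1 := hmin (u x) hxS
  have h2 := Finset.card_le_card hsub
  have h3 := hdeg x
  omega

private theorem keyB {V : Type*} [Fintype V] [DecidableEq V]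
    (B : SimpleGraph V) [DecidableRel B.Adj] (k : ℕ)
    (S : Finset V) (hS : KConnOn B k S) :
    ∀ v ∈ S, k ≤ (S.filter (fun w => B.Adj v w)).card := by
  intro v hv
  by_contra hlt
  push_neg at hlt
  set T := S.filter (fun w => B.Adj v w) with hTdef
  have hconn := hS.2 T hlt
  have hTsub : T ⊆ S := Finset.filter_subset _ _
  have hcard2 : 2 ≤ (S \ T).card := by
    rw [Finset.card_sdiff_of_subset hTsub]
    have := hS.1
    omega
  have hvT : v ∉ T := by
    rw [hTdef, Finset.mem_filter]
    rintro ⟨-, h⟩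
    exact B.loopless.irrefl v h
  have hvmem : v ∈ (S : Set V) \ (T : Set V) := ⟨hv, hvT⟩
  have h12 : 1 < (S \ T).card := by omega
  obtain ⟨w, hw, hwv⟩ := Finset.exists_mem_ne h12 v
  have hwmem : w ∈ (S : Set V) \ (T : Set V) := by
    rw [Finset.mem_sdiff] at hw
    exact ⟨hw.1, hw.2⟩
  obtain ⟨p⟩ := hconn.preconnected ⟨v, hvmem⟩ ⟨w, hwmem⟩
  cases p with
  | nil => exact hwv rfl
  | cons h q =>
    rename_i b
    have hadj : B.Adj v b.val := h
    have hbT : b.val ∈ T := Finset.mem_filter.mpr ⟨b.2.1, hadj⟩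
    exact b.2.2 hbT

theorem stmt_14 {V : Type*} [Fintype V] [DecidableEq V]
    (B : SimpleGraph V) [DecidableRel B.Adj] (k : ℕ) (hk : 0 < k)
    (u : Fin (2 * k - 1) → V) (hu : Function.Injective u)
    (hdeg : ∀ x : Fin (2 * k - 1),
      (Finset.univ.filter (fun v =>
        B.Adj (u x) v ∧ ∀ y : Fin (2 * k - 1), y ≤ x → v ≠ u y)).card ≤ k - 1) :
    (¬ ∃ S : Finset V, Fintype.card V - (2 * k - 2) ≤ S.card ∧
        ∀ v ∈ S, k ≤ (S.filter (fun w => B.Adj v w)).card) ∧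
    (¬ ∃ S : Finset V, Fintype.card V - (2 * k - 2) ≤ S.card ∧
        KConnOn B k S) := by
  constructor
  · rintro ⟨S, h1, h2⟩
    exact keyA B k hk u hu hdeg S h1 h2
  · rintro ⟨S, h1, h2⟩
    exact keyA B k hk u hu hdeg S h1 (keyB B k S h2)
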